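/- Define u(x,t) = sinh(−t)/(cosh x + cosh t) and R(x,t) = (cosh t · cosh x + 1)/(sinh(−t)·(cosh x + cosh t)) for x ∈ ℝ, t < 0. Then −∂²/∂x² (log u)(x,t) = u(x,t)·R(x,t) for all x ∈ ℝ, t < 0, and R(x,t) > 0. -/

import Mathlib

open Filter Set

/-- For the Rosenau solution `u(x,t) = sinh(-t)/(cosh x + cosh t)`, the scalar curvature
`R(x,t) = (cosh t · cosh x + 1)/(sinh(-t)(cosh x + cosh t))` satisfies
`-∂²/∂x² (log u) = u · R` and `R > 0` for `t < 0`. -/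
theorem rosenau_scalar_curvature (u R : ℝ → ℝ → ℝ)
    (hu : ∀ x t : ℝ, u x t = Real.sinh (-t) / (Real.cosh x + Real.cosh t))
    (hR : ∀ x t : ℝ, R x t = (Real.cosh t * Real.cosh x + 1)
      / (Real.sinh (-t) * (Real.cosh x + Real.cosh t))) :
    ∀ x t : ℝ, t < 0 →
      -(deriv (deriv (fun y => Real.log (u y t))) x) = u x t * R x t ∧
      0 < R x t := by
  intro x t ht
  have hst : 0 < Real.sinh (-t) := Real.sinh_pos_iff.2 (by linarith)
  have hden : ∀ y : ℝ, 0 < Real.cosh y + Real.cosh t := fun y => by positivity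
  have hfun : (fun y => Real.log (u y t)) =
      fun y => Real.log (Real.sinh (-t)) - Real.log (Real.cosh y + Real.cosh t) := by
    funext y
    rw [hu, Real.log_div hst.ne' (hden y).ne']
  have hderiv1 : deriv (fun y => Real.log (u y t)) =
      fun y => -(Real.sinh y / (Real.cosh y + Real.cosh t)) := by
    funext y
    rw [hfun]
    have h1 : HasDerivAt (fun y => Real.cosh y + Real.cosh t) (Real.sinh y) y :=
      (Real.hasDerivAt_cosh y).add_const _
    have h2 : HasDerivAt (fun y => Real.log (Real.cosh y + Real.cosh t))
        (Real.sinh y / (Real.cosh y + Real.cosh t)) y := by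
      have := (Real.hasDerivAt_log (hden y).ne').comp y h1
      simpa [div_eq_inv_mul, Function.comp_def] using this
    have h3 := h2.const_sub (Real.log (Real.sinh (-t)))
    have := h3.deriv
    simpa [sub_eq_add_neg] using this
  rw [hderiv1]
  have h4 : HasDerivAt (fun y => -(Real.sinh y / (Real.cosh y + Real.cosh t)))
      (-((Real.cosh x * (Real.cosh x + Real.cosh t) - Real.sinh x * Real.sinh x)
        / (Real.cosh x + Real.cosh t) ^ 2)) x := by
    have h1 : HasDerivAt (fun y => Real.cosh y + Real.cosh t) (Real.sinh x) x :=
      (Real.hasDerivAt_cosh x).add_const _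
    exact ((Real.hasDerivAt_sinh x).div h1 (hden x).ne').neg
  rw [h4.deriv]
  constructor
  · rw [hu, hR]
    have hc := Real.cosh_sq_sub_sinh_sq x
    have hd := (hden x).ne'
    have hst' : Real.sinh t ≠ 0 := by
      rw [Real.sinh_neg] at hst; intro h; rw [h] at hst; simp at hst
    rw [div_mul_div_comm, neg_neg, div_eq_div_iff (by positivity) (by positivity)]
    linear_combination Real.sinh (-t) * (Real.cosh x + Real.cosh t) ^ 2 * hc
  · rw [hR]
    have h1 : 0 < Real.cosh t * Real.cosh x + 1 := by positivity
    positivity
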